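/- Let p be a prime, l ≥ 1, s a positive divisor of p−1, and define h(x) = x^{s p^{l−1}} on Z/p^l Z. If x, y ∈ Z/p^l Z satisfy h(x) ≠ h(y), then h(y) − h(x) is a unit of Z/p^l Z. -/

import Mathlib

lemma aux_isUnit_iff (p l : ℕ) (hp : p.Prime) (hl : 1 ≤ l) (c : ZMod (p ^ l)) :
    IsUnit c ↔ (ZMod.castHom (dvd_pow_self p (Nat.one_le_iff_ne_zero.mp hl)) (ZMod p)) c ≠ 0 := by
  haveI : Fact p.Prime := ⟨hp⟩
  haveI : NeZero (p ^ l) := ⟨pow_ne_zero _ hp.pos.ne'⟩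
  have hc : c = (c.val : ZMod (p ^ l)) := (ZMod.natCast_rightInverse c).symm
  rw [hc, map_natCast, ZMod.isUnit_iff_coprime, Nat.coprime_pow_right_iff hl _ _,
    Nat.coprime_comm, hp.coprime_iff_not_dvd, not_iff_not, ← ZMod.natCast_eq_zero_iff]

/-- For a prime `p`, `l ≥ 1`, `s ∣ p - 1`, `s > 0` and `h x = x^(s·p^(l-1))` on
`ZMod (p^l)`: if `h x ≠ h y` then `h y - h x` is a unit. -/
theorem stmt_10 (p l s : ℕ) (hp : p.Prime) (hl : 1 ≤ l)
    (hs : 0 < s) (hsd : s ∣ p - 1) (x y : ZMod (p ^ l))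
    (hxy : x ^ (s * p ^ (l - 1)) ≠ y ^ (s * p ^ (l - 1))) :
    IsUnit (y ^ (s * p ^ (l - 1)) - x ^ (s * p ^ (l - 1))) := by
  haveI : Fact p.Prime := ⟨hp⟩
  haveI : NeZero (p ^ l) := ⟨pow_ne_zero _ hp.pos.ne'⟩
  set n := s * p ^ (l - 1) with hn
  set f := ZMod.castHom (dvd_pow_self p (Nat.one_le_iff_ne_zero.mp hl)) (ZMod p) with hf
  have hn0 : n ≠ 0 := Nat.mul_ne_zero hs.ne' (pow_ne_zero _ hp.pos.ne')
  have hln : l ≤ n := by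
    calc l ≤ p ^ (l - 1) := by
            have h2 : l - 1 < 2 ^ (l - 1) := Nat.lt_two_pow_self
            have : 2 ^ (l - 1) ≤ p ^ (l - 1) := Nat.pow_le_pow_left hp.two_le _
            omega
      _ ≤ n := Nat.le_mul_of_pos_left _ hs
  -- nilpotence of non-units
  have hnil : ∀ z : ZMod (p ^ l), f z = 0 → z ^ n = 0 := by
    intro z hz
    have hdvd : p ∣ z.val := by
      rwa [show f z = ((z.val : ℕ) : ZMod p) by rw [← map_natCast f, ZMod.natCast_rightInverse z],
        ZMod.natCast_eq_zero_iff] at hz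
    obtain ⟨m, hm⟩ := hdvd
    have hzl : z ^ l = 0 := by
      have : z = ((p * m : ℕ) : ZMod (p ^ l)) := by rw [← hm, ZMod.natCast_rightInverse z]
      rw [this]
      push_cast
      rw [mul_pow, ← Nat.cast_pow, ZMod.natCast_self, zero_mul]
    calc z ^ n = z ^ l * z ^ (n - l) := by rw [← pow_add]; congr 1; omega
      _ = 0 := by rw [hzl, zero_mul]
  by_contra hne
  rw [aux_isUnit_iff p l hp hl, not_not] at hne
  have hfeq : (f y) ^ n = (f x) ^ n := by
    have := sub_eq_zero.mp (by simpa [map_sub, map_pow] using hne)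
    exact this
  by_cases hfx : f x = 0
  · have hfy : f y = 0 := by
      have : (f y) ^ n = 0 := by rw [hfeq, hfx, zero_pow hn0]
      exact pow_eq_zero_iff hn0 |>.mp this
    exact hxy (by rw [hnil x hfx, hnil y hfy])
  · have hfy : f y ≠ 0 := fun h => hfx (pow_eq_zero_iff hn0 |>.mp (hfeq ▸ (by rw [h, zero_pow hn0])))
    have hux : IsUnit x := (aux_isUnit_iff p l hp hl x).mpr hfx
    have huy : IsUnit y := (aux_isUnit_iff p l hp hl y).mpr hfy
    set k := (p - 1) / s with hk
    have hsk : s * k = p - 1 := Nat.mul_div_cancel' hsd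
    have hp1 : 0 < p - 1 := by have := hp.two_le; omega
    have hk0 : 0 < k := by
      rcases Nat.eq_zero_or_pos k with h | h
      · rw [h, mul_zero] at hsk; omega
      · exact h
    have htot : n * k = (p ^ l).totient := by
      rw [Nat.totient_prime_pow hp (by omega : 0 < l)]
      rw [hn, mul_comm s _, mul_assoc, hsk]
    have hpowtot : ∀ z : ZMod (p ^ l), IsUnit z → (z ^ n) ^ k = 1 := by
      intro z hz
      rw [← pow_mul, htot]
      obtain ⟨u, rfl⟩ := hz
      rw [← Units.val_pow_eq_pow_val, ZMod.pow_totient u, Units.val_one]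
    -- geometric sum
    set S := ∑ i ∈ Finset.range k, (y ^ n) ^ i * (x ^ n) ^ (k - 1 - i) with hS
    have hgeom : S * (y ^ n - x ^ n) = 0 := by
      rw [hS, geom_sum₂_mul, hpowtot x hux, hpowtot y huy, sub_self]
    have hfS : f S = (k : ZMod p) * ((f x) ^ n) ^ (k - 1) := by
      rw [hS, map_sum]
      have : ∀ i ∈ Finset.range k,
          f ((y ^ n) ^ i * (x ^ n) ^ (k - 1 - i)) = ((f x) ^ n) ^ (k - 1) := by
        intro i hi
        have hik := Finset.mem_range.mp hi
        have heq : i + (k - 1 - i) = k - 1 := by omega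
        rw [map_mul, map_pow, map_pow, map_pow, map_pow, hfeq, ← pow_mul, ← pow_mul, ← pow_mul,
          ← pow_add, ← Nat.mul_add, heq]
      rw [Finset.sum_congr rfl this, Finset.sum_const, Finset.card_range, nsmul_eq_mul]
    have hkp : (k : ZMod p) ≠ 0 := by
      rw [Ne, ZMod.natCast_eq_zero_iff]
      intro hpk
      have := Nat.le_of_dvd hk0 hpk
      have : k ≤ p - 1 := Nat.le_of_dvd hp1 ⟨s, by rw [mul_comm]; exact hsk.symm⟩
      omega
    have hSunit : IsUnit S := by
      rw [aux_isUnit_iff p l hp hl, hfS]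
      exact mul_ne_zero hkp (pow_ne_zero _ (pow_ne_zero _ hfx))
    exact hxy (sub_eq_zero.mp (hSunit.mul_right_eq_zero.mp hgeom)).symm
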